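/- Let (X, ρ₁) be a weighted space, let q : X → q(X) be a continuous surjection from (X, ρ₁) onto a weighted space (q(X), ρ₂) with ρ₂(q(x)) = ρ₁(x) for all x ∈ X, and let P⁽¹⁾ be a generalized Feller semigroup on 𝓑^{ρ₁}(X). Let D be a dense subspace of 𝓑^{ρ₂}(q(X)) such that for every f ∈ D and every t ≥ 0 there exists g ∈ 𝓑^{ρ₂}(q(X)) with P⁽¹⁾_t(f ∘ q) = g ∘ q. Then there exists a generalized Feller semigroup P⁽²⁾ on 𝓑^{ρ₂}(q(X)) such that P⁽¹⁾_t(f ∘ q) = (P⁽²⁾_t f) ∘ q for all f ∈ 𝓑^{ρ₂}(q(X)) and t ≥ 0; in particular, the range of the bounded linear operator M : 𝓑^{ρ₂}(q(X)) → 𝓑^{ρ₁}(X), M f := f ∘ q, is closed. -/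

import Mathlib

open scoped ENNReal NNReal
open Filter Set MeasureTheory TopologicalSpace

noncomputable section

/-- An admissible weight function on a topological space: strictly positive with compact
and separable sublevel sets. -/
structure AdmissibleWeight {X : Type*} [TopologicalSpace X] (ρ : X → ℝ) : Prop where
  pos : ∀ x, 0 < ρ x
  isCompact_sublevel : ∀ R : ℝ, 0 < R → IsCompact {x | ρ x ≤ R}
  isSeparable_sublevel : ∀ R : ℝ, 0 < R → TopologicalSpace.IsSeparable {x | ρ x ≤ R}

/-- The Banach space of bounded real-valued functions on `X`, with the sup norm. -/
abbrev BddFun (X : Type*) := lp (fun _ : X => ℝ) ∞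

/-- Bounded continuous functions, divided by the weight `ρ`.  Under the isometric
identification `f ↦ f / ρ` of `B^ρ(X)` with bounded functions, this is the image of
`C_b(X)`. -/
def preCalB {X : Type*} [TopologicalSpace X] (ρ : X → ℝ) : Submodule ℝ (BddFun X) where
  carrier := {g | ∃ f : X → ℝ, Continuous f ∧ (∃ C, ∀ x, |f x| ≤ C) ∧ ∀ x, g x = f x / ρ x}
  add_mem' := by
    rintro g₁ g₂ ⟨f₁, hc₁, ⟨C₁, hb₁⟩, h₁⟩ ⟨f₂, hc₂, ⟨C₂, hb₂⟩, h₂⟩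
    refine ⟨f₁ + f₂, hc₁.add hc₂, ⟨C₁ + C₂, fun x => ?_⟩, fun x => ?_⟩
    · calc |(f₁ + f₂) x| ≤ |f₁ x| + |f₂ x| := abs_add_le _ _
        _ ≤ C₁ + C₂ := add_le_add (hb₁ x) (hb₂ x)
    · have : (g₁ + g₂ : BddFun X) x = g₁ x + g₂ x := by
        rw [lp.coeFn_add]; rfl
      rw [this, h₁ x, h₂ x]
      simp [Pi.add_apply, add_div]
  zero_mem' := ⟨0, continuous_const, ⟨0, by simp⟩, fun x => by simp⟩
  smul_mem' := by
    rintro c g ⟨f, hc, ⟨C, hb⟩, h⟩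
    refine ⟨fun x => c * f x, continuous_const.mul hc, ⟨|c| * C, fun x => ?_⟩, fun x => ?_⟩
    · rw [abs_mul]
      exact mul_le_mul_of_nonneg_left (hb x) (abs_nonneg c)
    · have : (c • g : BddFun X) x = c * g x := by
        rw [lp.coeFn_smul]; rfl
      rw [this, h x, mul_div_assoc]

/-- `𝓑^ρ(X)`: the closure of (the image of) the bounded continuous functions in `B^ρ(X)`,
realized under the isometric identification `f ↦ f / ρ` as a closed subspace of the bounded
functions on `X`. -/
def calB {X : Type*} [TopologicalSpace X] (ρ : X → ℝ) : Submodule ℝ (BddFun X) :=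
  (preCalB ρ).topologicalClosure

variable {X : Type*} [TopologicalSpace X] {ρ : X → ℝ}

/-- The value at `x` of (the `f/ρ` representation of) an element of `𝓑^ρ(X)`;
this equals `ρ(x)⁻¹ f(x)`. -/
def scaledApp (f : calB ρ) (x : X) : ℝ := (f : BddFun X) x

/-- The true value `f(x)` of an element of `𝓑^ρ(X)`. -/
def valOf (f : calB ρ) (x : X) : ℝ := ρ x * scaledApp f x

/-- A function `F : X → ℝ` belongs to `𝓑^ρ(X)`. -/
def MemCalB {X : Type*} [TopologicalSpace X] (ρ : X → ℝ) (F : X → ℝ) : Prop :=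
  ∃ g : BddFun X, g ∈ calB ρ ∧ ∀ x, g x = F x / ρ x

/-- A generalized Feller semigroup on `𝓑^ρ(X)`. -/
structure IsGenFellerSemigroup {X : Type*} [TopologicalSpace X] (ρ : X → ℝ)
    (P : ℝ≥0 → ((calB ρ) →L[ℝ] (calB ρ))) : Prop where
  map_zero : P 0 = ContinuousLinearMap.id ℝ (calB ρ)
  semigroup : ∀ s t : ℝ≥0, P (s + t) = (P s).comp (P t)
  tendsto_apply : ∀ (f : calB ρ) (x : X),
    Tendsto (fun t : ℝ≥0 => valOf (P t f) x) (nhds 0) (nhds (valOf f x))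
  norm_bound : ∃ (C : ℝ) (ε : ℝ≥0), 0 < ε ∧ ∀ t ≤ ε, ‖P t‖ ≤ C
  pos : ∀ (t : ℝ≥0) (f : calB ρ), (∀ x, 0 ≤ valOf f x) → ∀ x, 0 ≤ valOf (P t f) x


universe u

/-- Transfer a continuous linear operator along an isometric linear embedding whose
range it preserves. -/
lemma transfer_exists {A B : Type*} [NormedAddCommGroup A] [NormedSpace ℝ A]
    [NormedAddCommGroup B] [NormedSpace ℝ B]
    (M : A →ₗ[ℝ] B) (hMnorm : ∀ f, ‖M f‖ = ‖f‖)
    (T : B →L[ℝ] B) (hinv : ∀ f : A, ∃ g : A, T (M f) = M g) :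
    ∃ S : A →L[ℝ] A, (∀ f, T (M f) = M (S f)) ∧ ‖S‖ ≤ ‖T‖ := by
  have hMinj : Function.Injective M := by
    intro f g h
    have hn := hMnorm (f - g)
    rw [map_sub, h, sub_self, norm_zero] at hn
    exact sub_eq_zero.mp (norm_eq_zero.mp hn.symm)
  let L : A →ₗ[ℝ] A :=
    { toFun := fun f => (hinv f).choose
      map_add' := by
        intro f g
        apply hMinj
        show M (hinv (f + g)).choose = M ((hinv f).choose + (hinv g).choose)
        calc M (hinv (f + g)).choose
            = T (M (f + g)) := ((hinv (f + g)).choose_spec).symm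
          _ = T (M f + M g) := congrArg T (map_add M f g)
          _ = T (M f) + T (M g) := map_add T _ _
          _ = M (hinv f).choose + M (hinv g).choose :=
              congrArg₂ (· + ·) (hinv f).choose_spec (hinv g).choose_spec
          _ = M ((hinv f).choose + (hinv g).choose) := (map_add M _ _).symm
      map_smul' := by
        intro c f
        apply hMinj
        show M (hinv (c • f)).choose = M (c • (hinv f).choose)
        calc M (hinv (c • f)).choose
            = T (M (c • f)) := ((hinv (c • f)).choose_spec).symm
          _ = T (c • M f) := congrArg T (map_smul M c f)
          _ = c • T (M f) := map_smul T c (M f)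
          _ = c • M (hinv f).choose := congrArg (c • ·) (hinv f).choose_spec
          _ = M (c • (hinv f).choose) := (map_smul M c _).symm }
  have hLbound : ∀ f : A, ‖L f‖ ≤ ‖T‖ * ‖f‖ := by
    intro f
    calc ‖L f‖ = ‖M (L f)‖ := (hMnorm _).symm
      _ = ‖T (M f)‖ := congrArg norm (show T (M f) = M (L f) from (hinv f).choose_spec).symm
      _ ≤ ‖T‖ * ‖M f‖ := T.le_opNorm _
      _ = ‖T‖ * ‖f‖ := by rw [hMnorm]
  refine ⟨L.mkContinuous ‖T‖ hLbound, fun f => (hinv f).choose_spec, ?_⟩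
  exact L.mkContinuous_norm_le (norm_nonneg _) hLbound

set_option maxHeartbeats 1000000 in
/-- Variant of the invariant subspace theorem in the case `ρ₂ ∘ q = ρ₁`: the growth
assumption is not needed, and additionally the range of the pullback operator
`M : f ↦ f ∘ q` is closed. -/
theorem invariant_subspace_genFeller_eqWeight
    {X : Type u} [TopologicalSpace X] [T2Space X] [CompletelyRegularSpace X]
    {X₂ : Type u} [TopologicalSpace X₂] [T2Space X₂] [CompletelyRegularSpace X₂]
    {ρ₁ : X → ℝ} (hρ₁ : AdmissibleWeight ρ₁)
    {ρ₂ : X₂ → ℝ} (hρ₂ : AdmissibleWeight ρ₂)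
    (q : X → X₂) (hqc : Continuous q) (hqs : Function.Surjective q)
    (hρq : ∀ x, ρ₂ (q x) = ρ₁ x)
    (P1 : ℝ≥0 → (calB ρ₁) →L[ℝ] (calB ρ₁)) (hP1 : IsGenFellerSemigroup ρ₁ P1)
    (M : (calB ρ₂) →ₗ[ℝ] (calB ρ₁))
    (hM : ∀ (f : calB ρ₂) (x : X), valOf (M f) x = valOf f (q x))
    (D : Submodule ℝ (calB ρ₂)) (hD : Dense (D : Set (calB ρ₂)))
    (hinv : ∀ t : ℝ≥0, ∀ f ∈ D, ∃ g : calB ρ₂, P1 t (M f) = M g) :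
    ∃ P2 : ℝ≥0 → (calB ρ₂) →L[ℝ] (calB ρ₂),
      IsGenFellerSemigroup ρ₂ P2 ∧
      (∀ (t : ℝ≥0) (f : calB ρ₂), P1 t (M f) = M (P2 t f)) ∧
      IsClosed (Set.range M : Set (calB ρ₁)) := by
  classical
  -- extensionality via `valOf`
  have hext : ∀ {f g : calB ρ₂}, (∀ y, valOf f y = valOf g y) → f = g := by
    intro f g h
    apply Subtype.ext
    apply lp.ext
    funext y
    have hy := h y
    unfold valOf scaledApp at hy
    exact mul_left_cancel₀ (hρ₂.pos y).ne' hy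
  -- scaled values of `M f`
  have hMs : ∀ (f : calB ρ₂) (x : X),
      ((M f : calB ρ₁) : BddFun X) x = ((f : calB ρ₂) : BddFun X₂) (q x) := by
    intro f x
    have h := hM f x
    unfold valOf scaledApp at h
    rw [hρq x] at h
    exact mul_left_cancel₀ (hρ₁.pos x).ne' h
  -- `M` is injective
  have hMinj : Function.Injective M := by
    intro f g h
    refine hext fun y => ?_
    obtain ⟨x, rfl⟩ := hqs y
    rw [← hM f x, ← hM g x, h]
  -- `M` is norm preserving
  have hMnorm : ∀ f : calB ρ₂, ‖M f‖ = ‖f‖ := by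
    intro f
    have h1 : ‖M f‖ = ⨆ x, ‖((M f : calB ρ₁) : BddFun X) x‖ :=
      lp.norm_eq_ciSup ((M f : calB ρ₁) : BddFun X)
    have h2 : ‖f‖ = ⨆ y, ‖((f : calB ρ₂) : BddFun X₂) y‖ :=
      lp.norm_eq_ciSup ((f : calB ρ₂) : BddFun X₂)
    rw [h1, h2]
    have heq : (fun x => ‖((M f : calB ρ₁) : BddFun X) x‖)
        = (fun y => ‖((f : calB ρ₂) : BddFun X₂) y‖) ∘ q := by
      funext x; simp [hMs f x, Function.comp]
    rw [iSup, iSup, heq, hqs.range_comp]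
  have hMcont : Continuous (M : calB ρ₂ → calB ρ₁) :=
    AddMonoidHomClass.continuous_of_bound M 1 (fun f => by rw [hMnorm, one_mul])
  haveI : CompleteSpace (calB ρ₂) :=
    (Submodule.isClosed_topologicalClosure _).completeSpace_coe
  -- `M` has closed range
  have hMisom : Isometry (M : calB ρ₂ → calB ρ₁) :=
    AddMonoidHomClass.isometry_of_norm M hMnorm
  have hclosed : IsClosed (Set.range (M : calB ρ₂ → calB ρ₁)) :=
    hMisom.isClosedEmbedding.isClosed_range
  -- invariance extends from `D` to everything
  have hinv' : ∀ (t : ℝ≥0) (f : calB ρ₂), ∃ g : calB ρ₂, P1 t (M f) = M g := by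
    intro t f
    have hc : Continuous (fun f : calB ρ₂ => P1 t (M f)) :=
      (P1 t).continuous.comp hMcont
    have hsub : (D : Set (calB ρ₂)) ⊆
        (fun f : calB ρ₂ => P1 t (M f)) ⁻¹' Set.range (M : calB ρ₂ → calB ρ₁) := by
      intro f hf
      obtain ⟨g, hg⟩ := hinv t f hf
      exact ⟨g, hg.symm⟩
    have hcl : closure (D : Set (calB ρ₂)) ⊆
        (fun f : calB ρ₂ => P1 t (M f)) ⁻¹' Set.range (M : calB ρ₂ → calB ρ₁) :=
      closure_minimal hsub (hclosed.preimage hc)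
    have hf : f ∈ closure (D : Set (calB ρ₂)) := by rw [hD.closure_eq]; trivial
    obtain ⟨g, hg⟩ := hcl hf
    exact ⟨g, hg.symm⟩
  -- the induced semigroup
  have htrans := fun t : ℝ≥0 =>
    transfer_exists M hMnorm (P1 t) (fun f => (hinv' t f).imp fun g hg => hg)
  let P2 : ℝ≥0 → (calB ρ₂) →L[ℝ] (calB ρ₂) := fun t => (htrans t).choose
  have hkey : ∀ (t : ℝ≥0) (f : calB ρ₂), P1 t (M f) = M (P2 t f) :=
    fun t f => (htrans t).choose_spec.1 f
  have hnormle : ∀ t : ℝ≥0, ‖P2 t‖ ≤ ‖P1 t‖ := fun t => (htrans t).choose_spec.2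
  refine ⟨P2, ?_, hkey, ?_⟩
  · constructor
    · -- map_zero
      apply ContinuousLinearMap.ext
      intro f
      apply hMinj
      rw [← hkey, hP1.map_zero]
      rfl
    · -- semigroup
      intro s t
      apply ContinuousLinearMap.ext
      intro f
      apply hMinj
      rw [← hkey, hP1.semigroup s t, ContinuousLinearMap.comp_apply,
        ContinuousLinearMap.comp_apply, hkey t f, hkey s (P2 t f)]
    · -- tendsto
      intro f y
      obtain ⟨x, rfl⟩ := hqs y
      have h1 := hP1.tendsto_apply (M f) x
      rw [hM f x] at h1
      exact h1.congr fun t => by rw [hkey, hM]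
    · -- norm bound
      obtain ⟨C, ε, hε, hC⟩ := hP1.norm_bound
      refine ⟨C, ε, hε, fun t ht => ?_⟩
      exact (hnormle t).trans (hC t ht)
    · -- positivity
      intro t f hf y
      obtain ⟨x, rfl⟩ := hqs y
      rw [← hM, ← hkey]
      refine hP1.pos t (M f) (fun x' => ?_) x
      rw [hM]
      exact hf _
  · exact hclosed

end
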